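/- The function G : S^{d-1} → ℝ ∪ {±∞} defined by G(ν) := inf{ g_b(ν) : b an orthonormal basis of ℝ^d with last vector ν } is upper semicontinuous: for every ν ∈ S^{d-1} and every sequence (ν_n) ⊂ S^{d-1} with ν_n → ν, one has limsup_{n→∞} G(ν_n) ≤ G(ν). -/

import Mathlib

open MeasureTheory Filter Topology RealInnerProductSpace

/-- The open cube of side `r` centred at the origin, with faces orthogonal to the
vectors of the orthonormal basis `b`. -/
def cubeSet (d : ℕ) (b : OrthonormalBasis (Fin d) ℝ (EuclideanSpace ℝ (Fin d)))
    (r : ℝ) : Set (EuclideanSpace ℝ (Fin d)) :=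
  { x | ∀ i : Fin d, |⟪x, b i⟫| < r / 2 }

/-- The scaled cell energy
`∫_{Q₁} [W(v)/ε + Σ_{ℓ=1}^k q_ℓ ε^{2ℓ-1} |∇^(ℓ)v|_ℓ²] dx` on the unit cube
oriented by `b`, where `|·|_ℓ = N ℓ` is a norm on symmetric `ℓ`-multilinear forms. -/
noncomputable def cellEnergy (d k : ℕ) (q : ℕ → ℝ) (W : ℝ → ℝ)
    (N : (ℓ : ℕ) → ContinuousMultilinearMap ℝ (fun _ : Fin ℓ => EuclideanSpace ℝ (Fin d)) ℝ → ℝ)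
    (b : OrthonormalBasis (Fin d) ℝ (EuclideanSpace ℝ (Fin d)))
    (ε : ℝ) (v : EuclideanSpace ℝ (Fin d) → ℝ) : ℝ :=
  ∫ x in cubeSet d b 1,
    (W (v x) / ε +
      ∑ ℓ ∈ Finset.Icc 1 k, q ℓ * ε ^ (2 * ℓ - 1) * (N ℓ (iteratedFDeriv ℝ ℓ v x)) ^ 2)

/-- The admissible class `A^ν_ε(b)`: `C^k` functions equal to `ū((x·ν)/ε)` on
`Q₁ \ Q_r` for some `r ∈ (0,1)`. -/
def AdmCl (d k : ℕ) (ubar : ℝ → ℝ)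
    (b : OrthonormalBasis (Fin d) ℝ (EuclideanSpace ℝ (Fin d)))
    (ν : EuclideanSpace ℝ (Fin d)) (ε : ℝ) (v : EuclideanSpace ℝ (Fin d) → ℝ) : Prop :=
  ContDiff ℝ (k : ℕ∞) v ∧ ∃ r : ℝ, 0 < r ∧ r < 1 ∧
    ∀ x ∈ cubeSet d b 1 \ cubeSet d b r, v x = ubar (⟪x, ν⟫ / ε)

/-- The cell-problem density `g_b(ν)` (with values in `EReal`). -/
noncomputable def gCell (d k : ℕ) (q : ℕ → ℝ) (W : ℝ → ℝ)
    (N : (ℓ : ℕ) → ContinuousMultilinearMap ℝ (fun _ : Fin ℓ => EuclideanSpace ℝ (Fin d)) ℝ → ℝ)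
    (ubar : ℝ → ℝ) (b : OrthonormalBasis (Fin d) ℝ (EuclideanSpace ℝ (Fin d)))
    (ν : EuclideanSpace ℝ (Fin d)) : EReal :=
  sInf { e : EReal | ∃ ε : ℝ, ∃ v : EuclideanSpace ℝ (Fin d) → ℝ,
    0 < ε ∧ ε < 1 ∧ AdmCl d k ubar b ν ε v ∧
    e = ((cellEnergy d k q W N b ε v : ℝ) : EReal) }


/-- The basis-independent density `G(ν) = inf { g_b(ν) : b orthonormal basis of ℝ^d
with last vector ν }` (with values in `EReal`). -/
noncomputable def GDen (d k : ℕ) (hd : 0 < d) (q : ℕ → ℝ) (W : ℝ → ℝ)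
    (N : (ℓ : ℕ) → ContinuousMultilinearMap ℝ (fun _ : Fin ℓ => EuclideanSpace ℝ (Fin d)) ℝ → ℝ)
    (ubar : ℝ → ℝ) (ν : EuclideanSpace ℝ (Fin d)) : EReal :=
  sInf { e : EReal | ∃ b : OrthonormalBasis (Fin d) ℝ (EuclideanSpace ℝ (Fin d)),
    b ⟨d - 1, Nat.sub_lt hd Nat.one_pos⟩ = ν ∧ e = gCell d k q W N ubar b ν }

noncomputable section

variable {d : ℕ}

local notation "Ed" => EuclideanSpace ℝ (Fin d)

/-- Rotation-like continuous linear map sending `a` to `c`. -/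
noncomputable def rotCLM (a c : Ed) : Ed →L[ℝ] Ed :=
  ContinuousLinearMap.id ℝ Ed + ((2 : ℝ) • innerSL ℝ a).smulRight c -
    (((1 + ⟪a, c⟫)⁻¹) • innerSL ℝ (a + c)).smulRight (a + c)

lemma rotCLM_apply (a c x : Ed) :
    rotCLM a c x = x + (2 * ⟪a, x⟫) • c - ((1 + ⟪a, c⟫)⁻¹ * ⟪a + c, x⟫) • (a + c) := by
  simp [rotCLM, ContinuousLinearMap.smulRight_apply, smul_smul, inner_add_left, mul_add, add_smul]

lemma rotCLM_norm_map {a c : Ed} (ha : ‖a‖ = 1) (hc : ‖c‖ = 1)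
    (h : 1 + ⟪a, c⟫ ≠ 0) (x : Ed) : ‖rotCLM a c x‖ = ‖x‖ := by
  have haa : ⟪a, a⟫ = (1:ℝ) := by rw [real_inner_self_eq_norm_sq, ha]; norm_num
  have hcc : ⟪c, c⟫ = (1:ℝ) := by rw [real_inner_self_eq_norm_sq, hc]; norm_num
  have hsq : ‖rotCLM a c x‖ ^ 2 = ‖x‖ ^ 2 := by
    rw [rotCLM_apply, ← real_inner_self_eq_norm_sq, ← real_inner_self_eq_norm_sq]
    simp only [inner_sub_left, inner_sub_right, inner_add_left, inner_add_right,
      real_inner_smul_left, real_inner_smul_right, haa, hcc, real_inner_comm x a,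
      real_inner_comm x c, real_inner_comm a c]
    generalize hX : (inner ℝ x x : ℝ) = X
    generalize hA : (inner ℝ x a : ℝ) = A
    generalize hC : (inner ℝ x c : ℝ) = C
    generalize hP : (inner ℝ a c : ℝ) = P at h ⊢
    field_simp
    ring
  nlinarith [norm_nonneg x, norm_nonneg (rotCLM a c x)]

lemma rotCLM_fixed {a c : Ed} (ha : ‖a‖ = 1) (h : 1 + ⟪a, c⟫ ≠ 0) :
    rotCLM a c a = c := by
  have h1 : ⟪a, a⟫ = (1:ℝ) := by rw [real_inner_self_eq_norm_sq, ha]; norm_num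
  have h2 : ⟪a + c, a⟫ = 1 + ⟪a, c⟫ := by
    rw [inner_add_left, h1, real_inner_comm c a]
  rw [rotCLM_apply, h1, h2, inv_mul_cancel₀ h]
  rw [one_smul]
  have : (2 * (1:ℝ)) • c = c + c := by rw [two_mul (1:ℝ)]; module
  rw [this]; abel

/-- The rotation as a linear isometry equivalence (junk value if the hypotheses fail). -/
noncomputable def rotE (a c : Ed) : Ed ≃ₗᵢ[ℝ] Ed :=
  if h : ‖a‖ = 1 ∧ ‖c‖ = 1 ∧ 1 + ⟪a, c⟫ ≠ 0 then
    LinearIsometry.toLinearIsometryEquiv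
      ⟨(rotCLM a c).toLinearMap, rotCLM_norm_map h.1 h.2.1 h.2.2⟩ rfl
  else LinearIsometryEquiv.refl ℝ Ed

lemma rotE_apply {a c : Ed} (h : ‖a‖ = 1 ∧ ‖c‖ = 1 ∧ 1 + ⟪a, c⟫ ≠ 0) (x : Ed) :
    rotE a c x = rotCLM a c x := by
  simp only [rotE, dif_pos h]
  rw [LinearIsometry.toLinearIsometryEquiv_apply]
  rfl

lemma rotE_fixed {a c : Ed} (h : ‖a‖ = 1 ∧ ‖c‖ = 1 ∧ 1 + ⟪a, c⟫ ≠ 0) :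
    rotE a c a = c := by rw [rotE_apply h, rotCLM_fixed h.1 h.2.2]


/-- Geometry: for unit vectors, `⟪a,c⟫ = 1 - ‖c-a‖²/2`. -/
lemma inner_eq_one_sub {a c : Ed} (ha : ‖a‖ = 1) (hc : ‖c‖ = 1) :
    ⟪a, c⟫ = 1 - ‖c - a‖ ^ 2 / 2 := by
  have := norm_sub_sq_real c a
  rw [hc, ha, real_inner_comm a c] at this
  linarith

lemma one_add_inner_ge {a c : Ed} (ha : ‖a‖ = 1) (hc : ‖c‖ = 1) (hδ : ‖c - a‖ ≤ 1/2) :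
    (3/2 : ℝ) ≤ 1 + ⟪a, c⟫ := by
  rw [inner_eq_one_sub ha hc]
  nlinarith [norm_nonneg (c - a)]

lemma one_add_inner_ne {a c : Ed} (ha : ‖a‖ = 1) (hc : ‖c‖ = 1) (hδ : ‖c - a‖ ≤ 1/2) :
    1 + ⟪a, c⟫ ≠ 0 := by
  have := one_add_inner_ge ha hc hδ; linarith

lemma rotCLM_sub_bound {a c : Ed} (ha : ‖a‖ = 1) (hc : ‖c‖ = 1) (hδ : ‖c - a‖ ≤ 1/2)
    (x : Ed) : ‖rotCLM a c x - x‖ ≤ 7 * ‖c - a‖ * ‖x‖ := by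
  set δ : ℝ := ‖c - a‖ with hδdef
  have hδ0 : 0 ≤ δ := norm_nonneg _
  set β : ℝ := ⟪a, x⟫ with hβdef
  set γ : ℝ := ⟪c, x⟫ with hγdef
  set c₀ : ℝ := 1 + ⟪a, c⟫ with hc₀def
  have hc₀ : (3/2 : ℝ) ≤ c₀ := one_add_inner_ge ha hc hδ
  have hc₀ne : c₀ ≠ 0 := by linarith
  set t : ℝ := c₀⁻¹ * (β + γ) with htdef
  have hdecomp : rotCLM a c x - x = (2*β - 2*t) • a + (2*β - t) • (c - a) := by
    rw [rotCLM_apply]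
    have hax : ⟪a + c, x⟫ = β + γ := by rw [inner_add_left]
    rw [hax]
    module
  have hβx : |β| ≤ ‖x‖ := by
    calc |β| ≤ ‖a‖ * ‖x‖ := abs_real_inner_le_norm a x
    _ = ‖x‖ := by rw [ha, one_mul]
  have hγx : |γ| ≤ ‖x‖ := by
    calc |γ| ≤ ‖c‖ * ‖x‖ := abs_real_inner_le_norm c x
    _ = ‖x‖ := by rw [hc, one_mul]
  have hβγ : |β - γ| ≤ δ * ‖x‖ := by
    have : β - γ = ⟪a - c, x⟫ := by rw [inner_sub_left]
    rw [this]
    calc |⟪a - c, x⟫| ≤ ‖a - c‖ * ‖x‖ := abs_real_inner_le_norm _ x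
    _ = δ * ‖x‖ := by rw [norm_sub_rev]
  have hc₀2 : |c₀ - 2| ≤ δ := by
    rw [hc₀def, inner_eq_one_sub ha hc, ← hδdef]
    have : |1 + (1 - δ^2/2) - 2| = δ^2/2 := by
      rw [abs_of_nonpos (by nlinarith)]; ring
    rw [this]; nlinarith
  have hβt : |β - t| ≤ (4/3) * δ * ‖x‖ := by
    have hrep : β - t = (β * (c₀ - 2) + (β - γ)) / c₀ := by
      rw [htdef]; field_simp; ring
    rw [hrep, abs_div, abs_of_pos (by linarith : (0:ℝ) < c₀)]
    rw [div_le_iff₀ (by linarith : (0:ℝ) < c₀)]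
    have h1 : |β * (c₀ - 2) + (β - γ)| ≤ |β| * |c₀ - 2| + |β - γ| := by
      calc |β * (c₀ - 2) + (β - γ)| ≤ |β * (c₀ - 2)| + |β - γ| := abs_add_le _ _
      _ = |β| * |c₀ - 2| + |β - γ| := by rw [abs_mul]
    nlinarith [mul_le_mul hβx hc₀2 (abs_nonneg _) (norm_nonneg x),
      mul_nonneg hδ0 (norm_nonneg x),
      mul_nonneg (mul_nonneg hδ0 (norm_nonneg x)) (by linarith : (0:ℝ) ≤ c₀ - 3/2)]
  have ht : |t| ≤ (4/3) * ‖x‖ := by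
    rw [htdef, abs_mul, abs_inv, abs_of_pos (by linarith : (0:ℝ) < c₀)]
    rw [inv_mul_le_iff₀ (by linarith : (0:ℝ) < c₀)]
    calc |β + γ| ≤ |β| + |γ| := abs_add_le _ _
    _ ≤ 2 * ‖x‖ := by linarith
    _ ≤ c₀ * ((4/3) * ‖x‖) := by nlinarith [norm_nonneg x]
  calc ‖rotCLM a c x - x‖ = ‖(2*β - 2*t) • a + (2*β - t) • (c - a)‖ := by rw [hdecomp]
  _ ≤ ‖(2*β - 2*t) • a‖ + ‖(2*β - t) • (c - a)‖ := norm_add_le _ _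
  _ = |2*β - 2*t| * ‖a‖ + |2*β - t| * δ := by rw [norm_smul, norm_smul]; simp [Real.norm_eq_abs, hδdef]
  _ ≤ 7 * δ * ‖x‖ := by
      rw [ha, mul_one]
      have h1 : |2*β - 2*t| ≤ 2 * ((4/3) * δ * ‖x‖) := by
        have : 2*β - 2*t = 2*(β - t) := by ring
        rw [this, abs_mul, abs_two]; linarith
      have h2 : |2*β - t| ≤ 2*‖x‖ + (4/3)*‖x‖ := by
        have h3 := abs_add_le (2*β) (-t)
        rw [abs_neg, ← sub_eq_add_neg, abs_mul, abs_two] at h3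
        linarith
      nlinarith [norm_nonneg x, abs_nonneg (2*β - t),
        mul_le_mul_of_nonneg_right h2 hδ0, mul_nonneg hδ0 (norm_nonneg x)]


end


/-- A subadditive, absolutely homogeneous function on a finite-dimensional real normed
space is continuous and linearly bounded by the norm. -/
lemma seminorm_cont_bound {X : Type*} [NormedAddCommGroup X] [NormedSpace ℝ X]
    [FiniteDimensional ℝ X] (N : X → ℝ)
    (hhom : ∀ (c : ℝ) (T : X), N (c • T) = |c| * N T)
    (hadd : ∀ T S : X, N (T + S) ≤ N T + N S) :
    Continuous N ∧ ∃ C : ℝ, 0 < C ∧ ∀ T : X, N T ≤ C * ‖T‖ := by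
  have hconv : ConvexOn ℝ Set.univ N := by
    refine ⟨convex_univ, fun x _ y _ a b ha hb hab => ?_⟩
    calc N (a • x + b • y) ≤ N (a • x) + N (b • y) := hadd _ _
    _ = a * N x + b * N y := by rw [hhom, hhom, abs_of_nonneg ha, abs_of_nonneg hb]
  have hcont : Continuous N :=
    continuousOn_univ.mp (hconv.continuousOn isOpen_univ)
  refine ⟨hcont, ?_⟩
  obtain ⟨C, hC⟩ := (isCompact_closedBall (0:X) 1).exists_bound_of_continuousOn
    hcont.continuousOn
  refine ⟨max C 1, lt_of_lt_of_le one_pos (le_max_right _ _), fun T => ?_⟩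
  rcases eq_or_ne T 0 with rfl | hT
  · have h0 : N 0 = 0 := by
      have := hhom 0 0; simpa using this
    simp [h0]
  · have hTn : (0:ℝ) < ‖T‖ := norm_pos_iff.mpr hT
    have hu : (‖T‖⁻¹ • T) ∈ Metric.closedBall (0:X) 1 := by
      simp [norm_smul, abs_of_nonneg (inv_nonneg.mpr hTn.le), inv_mul_cancel₀ hTn.ne']
    have h1 : N T = ‖T‖ * N (‖T‖⁻¹ • T) := by
      rw [hhom, abs_of_nonneg (inv_nonneg.mpr hTn.le)]
      field_simp
    have h2 : N (‖T‖⁻¹ • T) ≤ C := (le_abs_self _).trans ((Real.norm_eq_abs _ ▸ hC _ hu))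
    calc N T = ‖T‖ * N (‖T‖⁻¹ • T) := h1
    _ ≤ ‖T‖ * C := by
        apply mul_le_mul_of_nonneg_left h2 hTn.le
    _ ≤ max C 1 * ‖T‖ := by
        rw [mul_comm]
        exact mul_le_mul_of_nonneg_right (le_max_left _ _) hTn.le

/-- Finite-dimensionality of spaces of continuous multilinear forms on `ℝ^d`. -/
instance cmmFinDim {d ℓ : ℕ} : FiniteDimensional ℝ
    (ContinuousMultilinearMap ℝ (fun _ : Fin ℓ => EuclideanSpace ℝ (Fin d)) ℝ) :=
  FiniteDimensional.of_injective
    (ContinuousMultilinearMap.toMultilinearMapLinear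
      (R' := ℝ) (A := ℝ) (M₁ := fun _ : Fin ℓ => EuclideanSpace ℝ (Fin d)) (M₂ := ℝ))
    ContinuousMultilinearMap.toMultilinearMap_injective

noncomputable section Transport
open ContinuousMultilinearMap
variable {d k : ℕ}

local notation "Ed" => EuclideanSpace ℝ (Fin d)

lemma inner_symm_left (R : Ed ≃ₗᵢ[ℝ] Ed) (x y : Ed) : ⟪R.symm x, y⟫ = ⟪x, R y⟫ := by
  conv_rhs => rw [← R.apply_symm_apply x]
  rw [R.inner_map_map]

lemma cube_map_preimage (b : OrthonormalBasis (Fin d) ℝ (EuclideanSpace ℝ (Fin d)))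
    (R : Ed ≃ₗᵢ[ℝ] Ed) (r : ℝ) :
    cubeSet d (b.map R) r = R.symm ⁻¹' cubeSet d b r := by
  ext x
  simp only [cubeSet, Set.mem_setOf_eq, Set.mem_preimage, OrthonormalBasis.map_apply]
  constructor
  · intro h i; rw [inner_symm_left]; exact h i
  · intro h i; rw [← inner_symm_left]; exact h i

lemma cube_preimage_map (b : OrthonormalBasis (Fin d) ℝ (EuclideanSpace ℝ (Fin d)))
    (R : Ed ≃ₗᵢ[ℝ] Ed) (r : ℝ) :
    R ⁻¹' (cubeSet d (b.map R) r) = cubeSet d b r := by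
  rw [cube_map_preimage]
  ext x
  simp

lemma AdmCl_map {ubar : ℝ → ℝ} {b : OrthonormalBasis (Fin d) ℝ (EuclideanSpace ℝ (Fin d))}
    {ν : Ed} {ε : ℝ} {v : EuclideanSpace ℝ (Fin d) → ℝ}
    (h : AdmCl d k ubar b ν ε v) (R : Ed ≃ₗᵢ[ℝ] Ed) :
    AdmCl d k ubar (b.map R) (R ν) ε (v ∘ ⇑R.symm) := by
  obtain ⟨hsm, r, hr0, hr1, hb⟩ := h
  refine ⟨?_, r, hr0, hr1, ?_⟩
  · have : (v ∘ ⇑R.symm) = v ∘ ⇑(R.symm : Ed →L[ℝ] Ed) := by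
      ext x; simp
    rw [this]
    exact hsm.comp (R.symm : Ed →L[ℝ] Ed).contDiff
  · intro x hx
    have hx' : R.symm x ∈ cubeSet d b 1 \ cubeSet d b r := by
      rw [cube_map_preimage, cube_map_preimage] at hx
      exact hx
    have := hb (R.symm x) hx'
    simp only [Function.comp_apply]
    rw [this, inner_symm_left]

lemma isOpen_cubeSet (b : OrthonormalBasis (Fin d) ℝ (EuclideanSpace ℝ (Fin d))) (r : ℝ) :
    IsOpen (cubeSet d b r) := by
  have : cubeSet d b r = ⋂ i, {x : Ed | |⟪x, b i⟫| < r/2} := by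
    ext x; simp [cubeSet, Set.mem_iInter]
  rw [this]
  exact isOpen_iInter_of_finite fun i =>
    isOpen_lt ((continuous_id.inner continuous_const).abs) continuous_const

lemma cellEnergy_map (q : ℕ → ℝ) (W : ℝ → ℝ)
    (N : (ℓ : ℕ) → ContinuousMultilinearMap ℝ (fun _ : Fin ℓ => EuclideanSpace ℝ (Fin d)) ℝ → ℝ)
    (b : OrthonormalBasis (Fin d) ℝ (EuclideanSpace ℝ (Fin d))) (ε : ℝ)
    (v : EuclideanSpace ℝ (Fin d) → ℝ) (hv : ContDiff ℝ (k : ℕ∞) v)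
    (R : Ed ≃ₗᵢ[ℝ] Ed) :
    cellEnergy d k q W N (b.map R) ε (v ∘ ⇑R.symm) =
      ∫ y in cubeSet d b 1,
        (W (v y) / ε + ∑ ℓ ∈ Finset.Icc 1 k, q ℓ * ε ^ (2 * ℓ - 1) *
          (N ℓ ((iteratedFDeriv ℝ ℓ v y).compContinuousLinearMap
            (fun _ => (R.symm : Ed →L[ℝ] Ed)))) ^ 2) := by
  have hmp : MeasurePreserving (⇑R) volume volume := R.measurePreserving
  have hemb : MeasurableEmbedding (⇑R) := R.toHomeomorph.measurableEmbedding
  rw [cellEnergy]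
  rw [← hmp.setIntegral_preimage_emb hemb _ (cubeSet d (b.map R) 1)]
  rw [cube_preimage_map]
  apply setIntegral_congr_fun ((isOpen_cubeSet b 1).measurableSet)
  intro y _
  dsimp only
  have hfun : (v ∘ ⇑R.symm) = v ∘ ⇑(R.symm : Ed →L[ℝ] Ed) := by ext z; simp
  have hWt : (v ∘ ⇑R.symm) (R y) = v y := by simp
  rw [hWt]
  congr 1
  apply Finset.sum_congr rfl
  intro ℓ hℓ
  have hle : ℓ ≤ k := (Finset.mem_Icc.mp hℓ).2
  have hcomp := (R.symm : Ed →L[ℝ] Ed).iteratedFDeriv_comp_right hv (R y)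
    (by exact_mod_cast hle)
  rw [hfun, hcomp]
  congr 2
  simp

lemma cube_subset_ball (b : OrthonormalBasis (Fin d) ℝ (EuclideanSpace ℝ (Fin d))) :
    cubeSet d b 1 ⊆ Metric.closedBall (0 : Ed) (Real.sqrt d) := by
  intro x hx
  simp only [Metric.mem_closedBall, dist_zero_right]
  have h1 : ‖x‖ = ‖b.repr x‖ := (b.repr.norm_map x).symm
  rw [h1, EuclideanSpace.norm_eq]
  apply Real.sqrt_le_sqrt
  calc ∑ i, ‖b.repr x i‖ ^ 2 ≤ ∑ i : Fin d, 1 := by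
        apply Finset.sum_le_sum
        intro i _
        have h2 : b.repr x i = ⟪b i, x⟫ := b.repr_apply_apply x i
        have h3 : |⟪x, b i⟫| < 1/2 := hx i
        rw [Real.norm_eq_abs, h2, real_inner_comm x (b i)] at *
        nlinarith [abs_nonneg (⟪x, b i⟫), sq_abs (⟪x, b i⟫), h3]
  _ = (d : ℝ) := by simp

lemma cube_measure_lt_top (b : OrthonormalBasis (Fin d) ℝ (EuclideanSpace ℝ (Fin d))) :
    volume (cubeSet d b 1) < ⊤ :=
  lt_of_le_of_lt (measure_mono (cube_subset_ball b)) measure_closedBall_lt_top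

lemma compCLM_id {ℓ : ℕ} (T : ContinuousMultilinearMap ℝ (fun _ : Fin ℓ => Ed) ℝ) :
    T.compContinuousLinearMap (fun _ => ContinuousLinearMap.id ℝ Ed) = T := by
  ext m
  simp [ContinuousMultilinearMap.compContinuousLinearMap_apply]

lemma tendsto_compCLM {ℓ : ℕ} (T : ContinuousMultilinearMap ℝ (fun _ : Fin ℓ => Ed) ℝ)
    {g : ℕ → (Ed →L[ℝ] Ed)} (hg : Tendsto g atTop (𝓝 (ContinuousLinearMap.id ℝ Ed))) :
    Tendsto (fun n => T.compContinuousLinearMap (fun _ => g n)) atTop (𝓝 T) := by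
  have hc : Continuous (fun G : Ed →L[ℝ] Ed =>
      T.compContinuousLinearMap (fun _ : Fin ℓ => G)) := by
    have h1 : Continuous (fun G : Ed →L[ℝ] Ed => (fun _ : Fin ℓ => G)) :=
      continuous_pi fun _ => continuous_id
    have h2 := (T.compContinuousLinearMapLRight (E := fun _ : Fin ℓ => EuclideanSpace ℝ (Fin d))).cont
    exact h2.comp h1
  have := (hc.tendsto (ContinuousLinearMap.id ℝ Ed)).comp hg
  simpa [compCLM_id, Function.comp_def] using this

lemma cellEnergy_tendsto (q : ℕ → ℝ) (W : ℝ → ℝ) (hWc : Continuous W) (hW0 : ∀ s, 0 ≤ W s)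
    (N : (ℓ : ℕ) → ContinuousMultilinearMap ℝ (fun _ : Fin ℓ => EuclideanSpace ℝ (Fin d)) ℝ → ℝ)
    (hN : ∀ ℓ ∈ Finset.Icc 1 k,
      (∀ T, 0 ≤ N ℓ T) ∧ (∀ T, N ℓ T = 0 ↔ T = 0) ∧
      (∀ (c : ℝ) T, N ℓ (c • T) = |c| * N ℓ T) ∧
      (∀ T S, N ℓ (T + S) ≤ N ℓ T + N ℓ S))
    (b : OrthonormalBasis (Fin d) ℝ (EuclideanSpace ℝ (Fin d))) {ε : ℝ} (hε : 0 < ε)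
    (v : EuclideanSpace ℝ (Fin d) → ℝ) (hv : ContDiff ℝ (k : ℕ∞) v)
    (g : ℕ → (Ed →L[ℝ] Ed)) (hg1 : ∀ n, ‖g n‖ ≤ 1)
    (hg : Tendsto g atTop (𝓝 (ContinuousLinearMap.id ℝ Ed))) :
    Tendsto (fun n => ∫ y in cubeSet d b 1,
        (W (v y) / ε + ∑ ℓ ∈ Finset.Icc 1 k, q ℓ * ε ^ (2 * ℓ - 1) *
          (N ℓ ((iteratedFDeriv ℝ ℓ v y).compContinuousLinearMap (fun _ => g n))) ^ 2))
      atTop (𝓝 (cellEnergy d k q W N b ε v)) := by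
  classical
  set K : Set Ed := Metric.closedBall (0 : Ed) (Real.sqrt d) with hK
  have hNdata : ∀ ℓ : ℕ, ∃ C : ℝ, 0 < C ∧ (ℓ ∈ Finset.Icc 1 k →
      (Continuous (N ℓ) ∧ ∀ T, N ℓ T ≤ C * ‖T‖)) := by
    intro ℓ
    by_cases hℓ : ℓ ∈ Finset.Icc 1 k
    · obtain ⟨hn, hdef, hhom, hadd⟩ := hN ℓ hℓ
      obtain ⟨hc, C, hC0, hCb⟩ := seminorm_cont_bound (N ℓ) hhom hadd
      exact ⟨C, hC0, fun _ => ⟨hc, hCb⟩⟩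
    · exact ⟨1, one_pos, fun h => absurd h hℓ⟩
  choose CN hCN0 hCN using hNdata
  have hMdata : ∀ ℓ : ℕ, ∃ M : ℝ, 0 ≤ M ∧ (ℓ ∈ Finset.Icc 1 k →
      ∀ x ∈ K, ‖iteratedFDeriv ℝ ℓ v x‖ ≤ M) := by
    intro ℓ
    by_cases hℓ : ℓ ∈ Finset.Icc 1 k
    · have hcont : Continuous (fun x => iteratedFDeriv ℝ ℓ v x) :=
        hv.continuous_iteratedFDeriv (by exact_mod_cast (Finset.mem_Icc.mp hℓ).2)
      obtain ⟨M, hM⟩ := (isCompact_closedBall (0:Ed) (Real.sqrt d)).exists_bound_of_continuousOn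
        hcont.continuousOn
      exact ⟨max M 0, le_max_right _ _, fun _ x hx => (hM x hx).trans (le_max_left _ _)⟩
    · exact ⟨0, le_rfl, fun h => absurd h hℓ⟩
  choose Mv hMv0 hMv using hMdata
  obtain ⟨M₀, hM₀⟩ := (isCompact_closedBall (0:Ed) (Real.sqrt d)).exists_bound_of_continuousOn
    (hWc.comp hv.continuous).continuousOn
  set B : ℝ := M₀ / ε + ∑ ℓ ∈ Finset.Icc 1 k, |q ℓ| * ε ^ (2 * ℓ - 1) * (CN ℓ * Mv ℓ) ^ 2
    with hB
  have hcubemeas : MeasurableSet (cubeSet d b 1) := (isOpen_cubeSet b 1).measurableSet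
  -- continuity of iterated derivatives
  have hiDFc : ∀ ℓ ∈ Finset.Icc 1 k, Continuous (fun y => iteratedFDeriv ℝ ℓ v y) := by
    intro ℓ hℓ
    exact hv.continuous_iteratedFDeriv (by exact_mod_cast (Finset.mem_Icc.mp hℓ).2)
  have key := tendsto_integral_of_dominated_convergence
    (μ := volume.restrict (cubeSet d b 1))
    (F := fun n y => (W (v y) / ε + ∑ ℓ ∈ Finset.Icc 1 k, q ℓ * ε ^ (2 * ℓ - 1) *
          (N ℓ ((iteratedFDeriv ℝ ℓ v y).compContinuousLinearMap (fun _ => g n))) ^ 2))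
    (f := fun y => (W (v y) / ε + ∑ ℓ ∈ Finset.Icc 1 k, q ℓ * ε ^ (2 * ℓ - 1) *
          (N ℓ (iteratedFDeriv ℝ ℓ v y)) ^ 2))
    (fun _ => B)
    (by -- measurability
      intro n
      apply Continuous.aestronglyMeasurable
      apply Continuous.add
      · exact (hWc.comp hv.continuous).div_const ε
      · apply continuous_finset_sum
        intro ℓ hℓ
        apply Continuous.mul continuous_const
        apply Continuous.pow
        exact ((hCN ℓ hℓ).1).comp
          (((ContinuousMultilinearMap.compContinuousLinearMapL
            (fun _ : Fin ℓ => g n)).continuous).comp (hiDFc ℓ hℓ)))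
    (by -- bound integrable
      exact integrableOn_const (C := B) (cube_measure_lt_top b).ne)
    (by -- bound holds
      intro n
      rw [ae_restrict_iff' hcubemeas]
      apply ae_of_all
      intro y hy
      have hyK : y ∈ K := cube_subset_ball b hy
      have h1 : |W (v y) / ε| ≤ M₀ / ε := by
        rw [abs_div, abs_of_pos hε, abs_of_nonneg (hW0 _)]
        have hWy : W (v y) ≤ M₀ := (le_abs_self _).trans ((Real.norm_eq_abs _ ▸ hM₀ y hyK))
        exact (div_le_div_iff_of_pos_right hε).mpr hWy
      have h2 : ∀ ℓ ∈ Finset.Icc 1 k,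
          |q ℓ * ε ^ (2 * ℓ - 1) *
            (N ℓ ((iteratedFDeriv ℝ ℓ v y).compContinuousLinearMap (fun _ => g n))) ^ 2|
          ≤ |q ℓ| * ε ^ (2 * ℓ - 1) * (CN ℓ * Mv ℓ) ^ 2 := by
        intro ℓ hℓ
        have hNn := (hN ℓ hℓ).1
        have hNb := (hCN ℓ hℓ).2
        set Tn := (iteratedFDeriv ℝ ℓ v y).compContinuousLinearMap (fun _ : Fin ℓ => g n)
          with hTndef
        have hprod : (∏ _i : Fin ℓ, ‖g n‖) ≤ 1 := by
          calc ∏ _i : Fin ℓ, ‖g n‖ ≤ ∏ _i : Fin ℓ, (1:ℝ) :=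
                Finset.prod_le_prod (fun _ _ => norm_nonneg _) (fun _ _ => hg1 n)
          _ = 1 := by simp
        have hT : ‖Tn‖ ≤ Mv ℓ := by
          have h₁ := ContinuousMultilinearMap.norm_compContinuousLinearMap_le
            (iteratedFDeriv ℝ ℓ v y) (fun _ : Fin ℓ => g n)
          rw [← hTndef] at h₁
          calc ‖Tn‖ ≤ ‖iteratedFDeriv ℝ ℓ v y‖ * ∏ _i : Fin ℓ, ‖g n‖ := h₁
          _ ≤ Mv ℓ * 1 := mul_le_mul (hMv ℓ hℓ y hyK) hprod
              (Finset.prod_nonneg fun _ _ => norm_nonneg _) (hMv0 ℓ)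
          _ = Mv ℓ := mul_one _
        have hNT : N ℓ Tn ≤ CN ℓ * Mv ℓ := by
          calc N ℓ Tn ≤ CN ℓ * ‖Tn‖ := hNb _
          _ ≤ CN ℓ * Mv ℓ := mul_le_mul_of_nonneg_left hT (hCN0 ℓ).le
        rw [abs_mul, abs_mul, abs_pow, abs_of_pos hε, abs_of_nonneg (sq_nonneg (N ℓ Tn))]
        apply mul_le_mul_of_nonneg_left ?_ (by positivity)
        apply pow_le_pow_left₀ (hNn _) hNT
      rw [Real.norm_eq_abs]
      calc |W (v y) / ε + ∑ ℓ ∈ Finset.Icc 1 k, q ℓ * ε ^ (2 * ℓ - 1) *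
            (N ℓ ((iteratedFDeriv ℝ ℓ v y).compContinuousLinearMap (fun _ => g n))) ^ 2|
          ≤ |W (v y) / ε| + |∑ ℓ ∈ Finset.Icc 1 k, q ℓ * ε ^ (2 * ℓ - 1) *
            (N ℓ ((iteratedFDeriv ℝ ℓ v y).compContinuousLinearMap (fun _ => g n))) ^ 2| :=
            abs_add_le _ _
      _ ≤ M₀ / ε + ∑ ℓ ∈ Finset.Icc 1 k, |q ℓ| * ε ^ (2 * ℓ - 1) * (CN ℓ * Mv ℓ) ^ 2 := by
          apply add_le_add h1
          calc |∑ ℓ ∈ Finset.Icc 1 k, q ℓ * ε ^ (2 * ℓ - 1) *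
              (N ℓ ((iteratedFDeriv ℝ ℓ v y).compContinuousLinearMap (fun _ => g n))) ^ 2|
              ≤ ∑ ℓ ∈ Finset.Icc 1 k, |q ℓ * ε ^ (2 * ℓ - 1) *
              (N ℓ ((iteratedFDeriv ℝ ℓ v y).compContinuousLinearMap (fun _ => g n))) ^ 2| :=
              Finset.abs_sum_le_sum_abs _ _
          _ ≤ ∑ ℓ ∈ Finset.Icc 1 k, |q ℓ| * ε ^ (2 * ℓ - 1) * (CN ℓ * Mv ℓ) ^ 2 :=
              Finset.sum_le_sum h2
      _ = B := hB.symm)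
    (by -- pointwise limit
      apply ae_of_all
      intro y
      apply Tendsto.add tendsto_const_nhds
      apply tendsto_finset_sum
      intro ℓ hℓ
      apply Tendsto.const_mul
      apply Tendsto.pow
      exact (((hCN ℓ hℓ).1).tendsto _).comp
        (tendsto_compCLM (iteratedFDeriv ℝ ℓ v y) hg))
  rw [cellEnergy]
  exact key

end Transport


/-- The density `G : S^{d-1} → ℝ ∪ {±∞}` is (sequentially) upper
semicontinuous: if `ν_n → ν` on the unit sphere, then `limsup_n G(ν_n) ≤ G(ν)`. -/
theorem statement13 (d k : ℕ) (hd : 2 ≤ d) (hk : 1 < k)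
    (q : ℕ → ℝ) (hqk : q k = 1) (W : ℝ → ℝ)
    (hWcont : Continuous W) (hWnonneg : ∀ s, 0 ≤ W s)
    (N : (ℓ : ℕ) → ContinuousMultilinearMap ℝ (fun _ : Fin ℓ => EuclideanSpace ℝ (Fin d)) ℝ → ℝ)
    (hN : ∀ ℓ ∈ Finset.Icc 1 k,
      (∀ T, 0 ≤ N ℓ T) ∧ (∀ T, N ℓ T = 0 ↔ T = 0) ∧
      (∀ (c : ℝ) T, N ℓ (c • T) = |c| * N ℓ T) ∧
      (∀ T S, N ℓ (T + S) ≤ N ℓ T + N ℓ S))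
    (ubar : ℝ → ℝ) (hubar : ContDiff ℝ (k : ℕ∞) ubar)
    (hubarNeg : ∀ t : ℝ, t ≤ -(1 / 8) → ubar t = -1)
    (hubarPlus : ∀ t : ℝ, (1 / 8 : ℝ) ≤ t → ubar t = 1)
    (hubar₁ : ∀ t : ℝ, |ubar t| ≤ 1)
    (hubarInt : Integrable (fun t =>
      W (ubar t) + ∑ ℓ ∈ Finset.Icc 1 k, |q ℓ| * (iteratedDeriv ℓ ubar t) ^ 2))
    (hubarPos : 0 < ∫ t : ℝ,
      (W (ubar t) + ∑ ℓ ∈ Finset.Icc 1 k, |q ℓ| * (iteratedDeriv ℓ ubar t) ^ 2))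
    (ν : EuclideanSpace ℝ (Fin d)) (hν : ‖ν‖ = 1)
    (νseq : ℕ → EuclideanSpace ℝ (Fin d)) (hνseq : ∀ n, ‖νseq n‖ = 1)
    (hconv : Tendsto νseq atTop (𝓝 ν)) :
    Filter.limsup (fun n => GDen d k (by omega) q W N ubar (νseq n)) atTop ≤
      GDen d k (by omega) q W N ubar ν := by
  have hd0 : 0 < d := by omega
  rw [GDen]
  apply le_sInf
  rintro e ⟨b, hblast, rfl⟩
  rw [gCell]
  apply le_sInf
  rintro e' ⟨ε, v, hε0, hε1, hadm, rfl⟩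
  -- the rotations carrying ν to νseq n
  set R : ℕ → (EuclideanSpace ℝ (Fin d) ≃ₗᵢ[ℝ] EuclideanSpace ℝ (Fin d)) :=
    fun n => rotE ν (νseq n) with hRdef
  set g : ℕ → (EuclideanSpace ℝ (Fin d) →L[ℝ] EuclideanSpace ℝ (Fin d)) :=
    fun n => ((R n).symm : EuclideanSpace ℝ (Fin d) →L[ℝ] EuclideanSpace ℝ (Fin d)) with hgdef
  set En : ℕ → ℝ := fun n => cellEnergy d k q W N ((b.map (R n))) ε (v ∘ ⇑(R n).symm)
    with hEndef
  -- eventually the rotation hypotheses hold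
  have hδ0 : Tendsto (fun n => ‖νseq n - ν‖) atTop (𝓝 0) :=
    tendsto_iff_norm_sub_tendsto_zero.mp hconv
  have hev : ∀ᶠ n in atTop, ‖νseq n - ν‖ ≤ 1/2 :=
    (hδ0.eventually (gt_mem_nhds (by norm_num : (0:ℝ) < 1/2))).mono fun n h => le_of_lt h
  have hcond : ∀ n, ‖νseq n - ν‖ ≤ 1/2 →
      (‖ν‖ = 1 ∧ ‖νseq n‖ = 1 ∧ 1 + ⟪ν, νseq n⟫ ≠ 0) := fun n h =>
    ⟨hν, hνseq n, one_add_inner_ne hν (hνseq n) h⟩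
  -- eventual inequality GDen (νseq n) ≤ En n
  have hle : ∀ᶠ n in atTop,
      GDen d k hd0 q W N ubar (νseq n) ≤ ((En n : ℝ) : EReal) := by
    filter_upwards [hev] with n hn
    have hc := hcond n hn
    have hRν : R n ν = νseq n := rotE_fixed hc
    have hlast : (b.map (R n)) ⟨d - 1, Nat.sub_lt hd0 Nat.one_pos⟩ = νseq n := by
      rw [OrthonormalBasis.map_apply, hblast, hRν]
    have hadm' : AdmCl d k ubar (b.map (R n)) (νseq n) ε (v ∘ ⇑(R n).symm) := by
      have := AdmCl_map hadm (R n)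
      rwa [hRν] at this
    calc GDen d k hd0 q W N ubar (νseq n)
        ≤ gCell d k q W N ubar (b.map (R n)) (νseq n) := by
          apply sInf_le
          exact ⟨b.map (R n), hlast, rfl⟩
    _ ≤ ((En n : ℝ) : EReal) := by
          apply sInf_le
          exact ⟨ε, v ∘ ⇑(R n).symm, hε0, hε1, hadm', rfl⟩
  -- convergence of energies
  have hg1 : ∀ n, ‖g n‖ ≤ 1 := by
    intro n
    apply ContinuousLinearMap.opNorm_le_bound _ zero_le_one
    intro x
    rw [one_mul]
    exact le_of_eq ((R n).symm.norm_map x)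
  have hgtends : Tendsto g atTop
      (𝓝 (ContinuousLinearMap.id ℝ (EuclideanSpace ℝ (Fin d)))) := by
    rw [tendsto_iff_norm_sub_tendsto_zero]
    apply squeeze_zero' (Eventually.of_forall fun n => norm_nonneg _)
      (f := fun n => ‖g n - ContinuousLinearMap.id ℝ (EuclideanSpace ℝ (Fin d))‖)
      (g := fun n => 7 * ‖νseq n - ν‖)
    · filter_upwards [hev] with n hn
      have hc := hcond n hn
      apply ContinuousLinearMap.opNorm_le_bound _
        (by positivity)
      intro x
      rw [ContinuousLinearMap.sub_apply, ContinuousLinearMap.id_apply]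
      have h1 : (g n) x = (R n).symm x := rfl
      rw [h1]
      have h2 : ‖(R n).symm x - x‖ = ‖R n ((R n).symm x) - R n x‖ := by
        rw [← LinearIsometryEquiv.map_sub, (R n).norm_map]
      rw [h2, (R n).apply_symm_apply]
      have h3 : ‖x - R n x‖ = ‖R n x - x‖ := norm_sub_rev _ _
      rw [h3]
      have h4 : R n x = rotCLM ν (νseq n) x := rotE_apply hc x
      rw [h4]
      exact rotCLM_sub_bound hν (hνseq n) hn x
    · have := hδ0.const_mul (7:ℝ)
      simpa using this
  have hEtends : Tendsto En atTop (𝓝 (cellEnergy d k q W N b ε v)) := by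
    have hform : En = fun n => ∫ y in cubeSet d b 1,
        (W (v y) / ε + ∑ ℓ ∈ Finset.Icc 1 k, q ℓ * ε ^ (2 * ℓ - 1) *
          (N ℓ ((iteratedFDeriv ℝ ℓ v y).compContinuousLinearMap (fun _ => g n))) ^ 2) := by
      funext n
      exact cellEnergy_map q W N b ε v hadm.1 (R n)
    rw [hform]
    exact cellEnergy_tendsto q W hWcont hWnonneg N hN b hε0 v hadm.1 g hg1 hgtends
  -- conclude via limsup monotonicity
  calc Filter.limsup (fun n => GDen d k hd0 q W N ubar (νseq n)) atTop
      ≤ Filter.limsup (fun n => ((En n : ℝ) : EReal)) atTop := limsup_le_limsup hle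
  _ = ((cellEnergy d k q W N b ε v : ℝ) : EReal) := by
      apply Tendsto.limsup_eq
      exact (continuous_coe_real_ereal.tendsto _).comp hEtends
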